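/- For every constant L > 0, the function f(x, t) = x·t·(2^{L/(x·t)} − 1) is convex on the convex domain {(x, t) ∈ ℝ² : x > 0, t > 0}. (This is the key step showing that, for fixed data allocation L, the joint bandwidth and computing-resource allocation problem is convex.) -/

import Mathlib

open Real Set

-- first derivative of r ↦ r^2 * (exp (c/r^2) - 1)
lemma hasDerivAt_hfun (c : ℝ) {r : ℝ} (hr : 0 < r) :
    HasDerivAt (fun r : ℝ => r^2 * (Real.exp (c / r^2) - 1))
      (2*r*(Real.exp (c/r^2) - 1) - (2*c/r) * Real.exp (c/r^2)) r := by
  have hr2 : (r:ℝ)^2 ≠ 0 := pow_ne_zero 2 hr.ne'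
  have hu : HasDerivAt (fun r : ℝ => c / r^2) (-(2*c)/r^3) r := by
    have h2 : HasDerivAt (fun r : ℝ => c / r^2)
        ((0 * r^2 - c * (2 * r^(2-1))) / (r^2)^2) r :=
      (hasDerivAt_const r c).div (hasDerivAt_pow 2 r) hr2
    convert h2 using 1
    field_simp
    ring
  have he : HasDerivAt (fun r : ℝ => Real.exp (c / r^2))
      (Real.exp (c/r^2) * (-(2*c)/r^3)) r := hu.exp
  have h : HasDerivAt (fun r : ℝ => r^2 * (Real.exp (c / r^2) - 1)) _ r := (hasDerivAt_pow 2 r).mul (he.sub_const 1)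
  convert h using 1
  field_simp
  ring

lemma hasDerivAt_D1 (c : ℝ) {r : ℝ} (hr : 0 < r) :
    HasDerivAt (fun r : ℝ => 2*r*(Real.exp (c/r^2) - 1) - (2*c/r) * Real.exp (c/r^2))
      (2*(Real.exp (c/r^2) - 1) - 2*(c/r^2)*Real.exp (c/r^2)
        + 4*(c/r^2)^2 * Real.exp (c/r^2)) r := by
  have hr2 : (r:ℝ)^2 ≠ 0 := pow_ne_zero 2 hr.ne'
  have hu : HasDerivAt (fun r : ℝ => c / r^2) (-(2*c)/r^3) r := by
    have h2 : HasDerivAt (fun r : ℝ => c / r^2)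
        ((0 * r^2 - c * (2 * r^(2-1))) / (r^2)^2) r :=
      (hasDerivAt_const r c).div (hasDerivAt_pow 2 r) hr2
    convert h2 using 1
    field_simp
    ring
  have he : HasDerivAt (fun r : ℝ => Real.exp (c / r^2))
      (Real.exp (c/r^2) * (-(2*c)/r^3)) r := hu.exp
  have h1 : HasDerivAt (fun r : ℝ => 2*r*(Real.exp (c/r^2) - 1))
      (2 * (Real.exp (c/r^2) - 1) + 2*r*(Real.exp (c/r^2) * (-(2*c)/r^3))) r := by
    have : HasDerivAt (fun r : ℝ => 2*r*(Real.exp (c/r^2) - 1)) _ r := ((hasDerivAt_id r).const_mul 2).mul (he.sub_const 1)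
    convert this using 1
    simp [id]
  have h2 : HasDerivAt (fun r : ℝ => (2*c/r) * Real.exp (c/r^2))
      ((0*r - 2*c*1)/r^2 * Real.exp (c/r^2) + (2*c/r) * (Real.exp (c/r^2) * (-(2*c)/r^3))) r :=
    (((hasDerivAt_const r (2*c)).div (hasDerivAt_id r) hr.ne')).mul he
  have h : HasDerivAt (fun r : ℝ => 2*r*(Real.exp (c/r^2) - 1) - (2*c/r) * Real.exp (c/r^2)) _ r := h1.sub h2
  convert h using 1
  field_simp
  ring

lemma hfun_convexOn {c : ℝ} (hc : 0 < c) :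
    ConvexOn ℝ (Ioi 0) (fun r : ℝ => r^2 * (Real.exp (c / r^2) - 1)) := by
  have hint : interior (Ioi (0:ℝ)) = Ioi 0 := interior_Ioi
  refine convexOn_of_hasDerivWithinAt2_nonneg (convex_Ioi 0) ?_
    (f' := fun r => 2*r*(Real.exp (c/r^2) - 1) - (2*c/r) * Real.exp (c/r^2))
    (f'' := fun r => 2*(Real.exp (c/r^2) - 1) - 2*(c/r^2)*Real.exp (c/r^2)
        + 4*(c/r^2)^2 * Real.exp (c/r^2)) ?_ ?_ ?_
  · intro r hr
    exact ((hasDerivAt_hfun c hr).continuousAt).continuousWithinAt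
  · intro r hr
    rw [hint] at hr ⊢
    exact ((hasDerivAt_hfun c hr).hasDerivWithinAt)
  · intro r hr
    rw [hint] at hr ⊢
    exact ((hasDerivAt_D1 c hr).hasDerivWithinAt)
  · intro r hr
    rw [hint] at hr
    set u := c / r^2 with hu
    have hupos : 0 < u := div_pos hc (pow_pos hr 2)
    have h1 : u + 1 ≤ Real.exp u := Real.add_one_le_exp u
    have h2 : (0:ℝ) ≤ 4*u^2 - 2*u + 2 := by nlinarith [sq_nonneg (2*u - 1)]
    nlinarith [mul_nonneg (sub_nonneg.2 h1) h2, hupos.le, sq_nonneg u,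
      mul_pos hupos hupos, (Real.exp_pos u).le]

lemma hfun_antitoneOn {c : ℝ} (hc : 0 < c) :
    AntitoneOn (fun r : ℝ => r^2 * (Real.exp (c / r^2) - 1)) (Ioi 0) := by
  have hint : interior (Ioi (0:ℝ)) = Ioi 0 := interior_Ioi
  refine antitoneOn_of_deriv_nonpos (convex_Ioi 0) ?_ ?_ ?_
  · intro r hr
    exact ((hasDerivAt_hfun c hr).continuousAt).continuousWithinAt
  · intro r hr
    rw [hint] at hr
    exact ((hasDerivAt_hfun c hr).differentiableAt).differentiableWithinAt
  · intro r hr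
    rw [hint] at hr
    rw [(hasDerivAt_hfun c hr).deriv]
    set u := c / r^2 with hu
    have hupos : 0 < u := div_pos hc (pow_pos hr 2)
    have hprod : Real.exp u * Real.exp (-u) = 1 := by
      rw [← Real.exp_add]; simp
    have h1 : -u + 1 ≤ Real.exp (-u) := Real.add_one_le_exp (-u)
    have key : Real.exp u - 1 ≤ u * Real.exp u := by
      nlinarith [mul_le_mul_of_nonneg_left h1 (Real.exp_pos u).le]
    have hr0 : r ≠ 0 := hr.ne'
    have hcu : c = u * r^2 := by rw [hu]; field_simp
    rw [hcu]
    have h3 : 2 * (u * r^2) / r = 2 * u * r := by rw [div_eq_iff hr0]; ring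
    rw [h3]
    nlinarith [mul_le_mul_of_nonneg_left key hr.le]

lemma sqrtmul_concave :
    ConcaveOn ℝ {p : ℝ × ℝ | 0 < p.1 ∧ 0 < p.2} (fun p : ℝ × ℝ => Real.sqrt (p.1 * p.2)) := by
  have hset : Convex ℝ {p : ℝ × ℝ | 0 < p.1 ∧ 0 < p.2} :=
    (convex_Ioi (0:ℝ)).prod (convex_Ioi (0:ℝ))
  refine ⟨hset, ?_⟩
  rintro ⟨p1, p2⟩ ⟨hp1, hp2⟩ ⟨q1, q2⟩ ⟨hq1, hq2⟩ a b ha hb hab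
  simp only [Prod.smul_mk, Prod.mk_add_mk, smul_eq_mul] at *
  have hA : (0:ℝ) ≤ p1 * p2 := (mul_pos hp1 hp2).le
  have hB : (0:ℝ) ≤ q1 * q2 := (mul_pos hq1 hq2).le
  have hlhs : 0 ≤ a * Real.sqrt (p1 * p2) + b * Real.sqrt (q1 * q2) := by positivity
  have hrhs : (0:ℝ) ≤ (a * p1 + b * q1) * (a * p2 + b * q2) := by positivity
  rw [Real.le_sqrt hlhs hrhs]
  set s := Real.sqrt (p1 * q2) with hs
  set t := Real.sqrt (q1 * p2) with ht
  have hs2 : s ^ 2 = p1 * q2 := Real.sq_sqrt (by positivity)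
  have ht2 : t ^ 2 = q1 * p2 := Real.sq_sqrt (by positivity)
  have hst : Real.sqrt (p1 * p2) * Real.sqrt (q1 * q2) = s * t := by
    rw [hs, ht, ← Real.sqrt_mul hA, ← Real.sqrt_mul (by positivity : (0:ℝ) ≤ p1 * q2)]
    congr 1
    ring
  have hA2 : Real.sqrt (p1 * p2) ^ 2 = p1 * p2 := Real.sq_sqrt hA
  have hB2 : Real.sqrt (q1 * q2) ^ 2 = q1 * q2 := Real.sq_sqrt hB
  have expand : (a * Real.sqrt (p1 * p2) + b * Real.sqrt (q1 * q2)) ^ 2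
      = a^2*(p1*p2) + 2*(a*b)*(s*t) + b^2*(q1*q2) := by
    linear_combination a^2 * hA2 + b^2 * hB2 + 2*a*b*hst
  rw [expand]
  have e1 : a*b*(p1*q2) = a*b*s^2 := by rw [hs2]
  have e2 : a*b*(q1*p2) = a*b*t^2 := by rw [ht2]
  nlinarith [e1, e2, mul_nonneg (mul_nonneg ha hb) (sq_nonneg (s - t))]

/-- For every `L > 0`, the function `(x, t) ↦ x t (2^{L/(x t)} − 1)` is convex
on `{(x, t) : x > 0, t > 0}`. -/
theorem energy_convex_in_x_t (L : ℝ) (hL : 0 < L) :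
    ConvexOn ℝ {p : ℝ × ℝ | 0 < p.1 ∧ 0 < p.2}
      (fun p : ℝ × ℝ => p.1 * p.2 * ((2 : ℝ) ^ (L / (p.1 * p.2)) - 1)) := by
  set c : ℝ := Real.log 2 * L with hc
  have hcpos : 0 < c := mul_pos (Real.log_pos one_lt_two) hL
  set S : Set (ℝ × ℝ) := {p : ℝ × ℝ | 0 < p.1 ∧ 0 < p.2} with hS
  set m : ℝ × ℝ → ℝ := fun p => Real.sqrt (p.1 * p.2) with hm
  have himg : m '' S = Set.Ioi 0 := by
    ext r
    constructor
    · rintro ⟨p, ⟨h1, h2⟩, rfl⟩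
      exact Real.sqrt_pos.2 (mul_pos h1 h2)
    · intro hr
      exact ⟨(r, r), ⟨hr, hr⟩, Real.sqrt_mul_self hr.le⟩
  have hcomp : ConvexOn ℝ S ((fun r : ℝ => r^2 * (Real.exp (c / r^2) - 1)) ∘ m) := by
    refine ConvexOn.comp_concaveOn ?_ sqrtmul_concave ?_
    · rw [himg]; exact hfun_convexOn hcpos
    · rw [himg]; exact hfun_antitoneOn hcpos
  refine hcomp.congr ?_
  rintro ⟨x, t⟩ ⟨hx, ht⟩
  have hxt : 0 < x * t := mul_pos hx ht
  have hsq : m (x, t) ^ 2 = x * t := Real.sq_sqrt hxt.le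
  simp only [Function.comp, hsq]
  rw [Real.rpow_def_of_pos two_pos]
  congr 2
  rw [hc]
  ring
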